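/- The map Φ is injective on P*: for all (x₁,y₁), (x₂,y₂) ∈ P*, if (1+x₁)·y₁⁻¹ = (1+x₂)·y₂⁻¹ in ℤ/N then (x₁,y₁) = (x₂,y₂). -/

import Mathlib

lemma aux_isUnit_of_casts (p q : ℕ) (hp : p.Prime) (hq : q.Prime)
    (z : ZMod (p * q))
    (h1 : ZMod.castHom (dvd_mul_right p q) (ZMod p) z ≠ 0)
    (h2 : ZMod.castHom (dvd_mul_left q p) (ZMod q) z ≠ 0) : IsUnit z := by
  haveI : NeZero (p * q) := ⟨mul_ne_zero hp.pos.ne' hq.pos.ne'⟩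
  haveI : NeZero p := ⟨hp.pos.ne'⟩
  haveI : NeZero q := ⟨hq.pos.ne'⟩
  obtain ⟨n, rfl⟩ := ZMod.natCast_rightInverse.surjective z
  rw [map_natCast] at h1 h2
  rw [ZMod.isUnit_iff_coprime]
  refine Nat.Coprime.mul_right ?_ ?_
  · rw [Nat.coprime_comm, hp.coprime_iff_not_dvd]
    intro hd
    exact h1 ((ZMod.natCast_eq_zero_iff n p).mpr hd)
  · rw [Nat.coprime_comm, hq.coprime_iff_not_dvd]
    intro hd
    exact h2 ((ZMod.natCast_eq_zero_iff n q).mpr hd)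

/-- the map `Φ(x,y) = (1+x)·y⁻¹` is injective on
`P* = {(x,y) ∈ ℤ/N × (ℤ/N)ˣ : x² − Dy² = 1}`, where `N = pq`. -/
theorem phi_injective (p q : ℕ) (hp : p.Prime) (hq : q.Prime)
    (hpodd : Odd p) (hqodd : Odd q) (hpq : p ≠ q)
    (D : ZMod (p * q))
    (hDp : ¬ ∃ t : ZMod p, t ^ 2 = ZMod.castHom (dvd_mul_right p q) (ZMod p) D)
    (hDq : ¬ ∃ t : ZMod q, t ^ 2 = ZMod.castHom (dvd_mul_left q p) (ZMod q) D)
    (hDp' : ¬ ∃ t : ZMod p, t ^ 2 = ZMod.castHom (dvd_mul_right p q) (ZMod p) (-D))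
    (hDq' : ¬ ∃ t : ZMod q, t ^ 2 = ZMod.castHom (dvd_mul_left q p) (ZMod q) (-D))
    (x₁ x₂ y₁ y₂ : ZMod (p * q))
    (hy₁ : IsUnit y₁) (hy₂ : IsUnit y₂)
    (h₁ : x₁ ^ 2 - D * y₁ ^ 2 = 1) (h₂ : x₂ ^ 2 - D * y₂ ^ 2 = 1)
    (heq : (1 + x₁) * y₁⁻¹ = (1 + x₂) * y₂⁻¹) :
    x₁ = x₂ ∧ y₁ = y₂ := by
  haveI : Fact p.Prime := ⟨hp⟩
  haveI : Fact q.Prime := ⟨hq⟩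
  haveI : NeZero p := ⟨hp.pos.ne'⟩
  haveI : NeZero q := ⟨hq.pos.ne'⟩
  -- D's reductions are nonzero
  have hDp0 : ZMod.castHom (dvd_mul_right p q) (ZMod p) D ≠ 0 :=
    fun h => hDp ⟨0, by simp [h]⟩
  have hDq0 : ZMod.castHom (dvd_mul_left q p) (ZMod q) D ≠ 0 :=
    fun h => hDq ⟨0, by simp [h]⟩
  -- 1 + x is a unit whenever (x, y) ∈ P*
  have key : ∀ x y : ZMod (p * q), IsUnit y → x ^ 2 - D * y ^ 2 = 1 → IsUnit (1 + x) := by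
    intro x y hy h
    apply aux_isUnit_of_casts p q hp hq
    · intro h0
      rw [map_add, map_one] at h0
      have hx : ZMod.castHom (dvd_mul_right p q) (ZMod p) x = -1 := by
        linear_combination h0
      have h' := congrArg (ZMod.castHom (dvd_mul_right p q) (ZMod p)) h
      simp only [map_sub, map_mul, map_pow, map_one, hx] at h'
      have hyu : IsUnit (ZMod.castHom (dvd_mul_right p q) (ZMod p) y) :=
        hy.map (ZMod.castHom (dvd_mul_right p q) (ZMod p))
      have hz : ZMod.castHom (dvd_mul_right p q) (ZMod p) D *
          ZMod.castHom (dvd_mul_right p q) (ZMod p) y ^ 2 = 0 := by linear_combination -h'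
      rcases mul_eq_zero.mp hz with h'' | h''
      · exact hDp0 h''
      · exact hyu.ne_zero ((pow_eq_zero_iff (two_ne_zero)).mp h'')
    · intro h0
      rw [map_add, map_one] at h0
      have hx : ZMod.castHom (dvd_mul_left q p) (ZMod q) x = -1 := by
        linear_combination h0
      have h' := congrArg (ZMod.castHom (dvd_mul_left q p) (ZMod q)) h
      simp only [map_sub, map_mul, map_pow, map_one, hx] at h'
      have hyu : IsUnit (ZMod.castHom (dvd_mul_left q p) (ZMod q) y) :=
        hy.map (ZMod.castHom (dvd_mul_left q p) (ZMod q))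
      have hz : ZMod.castHom (dvd_mul_left q p) (ZMod q) D *
          ZMod.castHom (dvd_mul_left q p) (ZMod q) y ^ 2 = 0 := by linear_combination -h'
      rcases mul_eq_zero.mp hz with h'' | h''
      · exact hDq0 h''
      · exact hyu.ne_zero ((pow_eq_zero_iff (two_ne_zero)).mp h'')
  -- 2 is a unit
  have h2u : IsUnit (2 : ZMod (p * q)) := by
    apply aux_isUnit_of_casts p q hp hq
    · rw [show ((2 : ZMod (p*q)) = ((2:ℕ) : ZMod (p*q))) by norm_num, map_natCast,
        Ne, ZMod.natCast_eq_zero_iff]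
      intro hd
      have : p = 2 := (Nat.prime_dvd_prime_iff_eq hp Nat.prime_two).mp hd
      exact (Nat.not_odd_iff_even.mpr (this ▸ even_two)) hpodd
    · rw [show ((2 : ZMod (p*q)) = ((2:ℕ) : ZMod (p*q))) by norm_num, map_natCast,
        Ne, ZMod.natCast_eq_zero_iff]
      intro hd
      have : q = 2 := (Nat.prime_dvd_prime_iff_eq hq Nat.prime_two).mp hd
      exact (Nat.not_odd_iff_even.mpr (this ▸ even_two)) hqodd
  have hx₁u : IsUnit (1 + x₁) := key x₁ y₁ hy₁ h₁
  have hy₁i : y₁ * y₁⁻¹ = 1 := ZMod.mul_inv_of_unit y₁ hy₁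
  have hy₂i : y₂ * y₂⁻¹ = 1 := ZMod.mul_inv_of_unit y₂ hy₂
  have hy₁iu : IsUnit (y₁⁻¹ : ZMod (p * q)) :=
    IsUnit.of_mul_eq_one _ ((mul_comm _ _).trans hy₁i)
  set m : ZMod (p * q) := (1 + x₁) * y₁⁻¹ with hm
  -- m² − D = 2(1+x₁)y₁⁻² = 2(1+x₂)y₂⁻²
  have e1 : m ^ 2 - D = 2 * (1 + x₁) * y₁⁻¹ ^ 2 := by
    have h' : m ^ 2 - D = ((1 + x₁)^2 - D * y₁^2) * y₁⁻¹^2 + D * (y₁ * y₁⁻¹)^2 - D := by ring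
    rw [h', hy₁i]
    linear_combination (y₁⁻¹^2) * h₁
  have e2 : m ^ 2 - D = 2 * (1 + x₂) * y₂⁻¹ ^ 2 := by
    have h' : m ^ 2 - D = ((1 + x₂)^2 - D * y₂^2) * y₂⁻¹^2 + D * (y₂ * y₂⁻¹)^2 - D := by
      rw [heq]; ring
    rw [h', hy₂i]
    linear_combination (y₂⁻¹^2) * h₂
  have hu : IsUnit (m ^ 2 - D) := by
    rw [e1]; exact (h2u.mul hx₁u).mul (hy₁iu.pow 2)
  have hD1 : (x₁ ^ 2 - 1) * y₁⁻¹ ^ 2 = D := by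
    calc (x₁^2-1)*y₁⁻¹^2 = (D*y₁^2)*y₁⁻¹^2 := by linear_combination y₁⁻¹^2 * h₁
    _ = D * (y₁*y₁⁻¹)^2 := by ring
    _ = D := by rw [hy₁i]; ring
  have hD2 : (x₂ ^ 2 - 1) * y₂⁻¹ ^ 2 = D := by
    calc (x₂^2-1)*y₂⁻¹^2 = (D*y₂^2)*y₂⁻¹^2 := by linear_combination y₂⁻¹^2 * h₂
    _ = D * (y₂*y₂⁻¹)^2 := by ring
    _ = D := by rw [hy₂i]; ring
  have ex1 : (m ^ 2 - D) * x₁ = m ^ 2 + D := by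
    linear_combination (x₁ - 1) * e1 + 2 * hD1
  have ex2 : (m ^ 2 - D) * x₂ = m ^ 2 + D := by
    linear_combination (x₂ - 1) * e2 + 2 * hD2
  have hm2 : m = (1 + x₂) * y₂⁻¹ := hm.trans heq
  have ey1 : (m ^ 2 - D) * y₁ = 2 * m := by
    linear_combination y₁ * e1 + 2*(1+x₁)*y₁⁻¹ * hy₁i - 2 * hm
  have ey2 : (m ^ 2 - D) * y₂ = 2 * m := by
    linear_combination y₂ * e2 + 2*(1+x₂)*y₂⁻¹ * hy₂i - 2 * hm2
  exact ⟨hu.mul_left_cancel (ex1.trans ex2.symm), hu.mul_left_cancel (ey1.trans ey2.symm)⟩
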